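/- arXiv:2511.08969 — 3 statements merged into one kernel-verified Lean document; each statement's English description precedes it below -/
import Mathlib

section
/- Let ⋆ be the bilinear product on ℂ[S_n] defined on permutations by u ⋆ w = u if u = w and 0 otherwise (i.e., the 'Hadamard product' with respect to the permutation basis). For subsets I, I' ⊆ {1, ..., n-1}, define β(I) = ∏_{i ∈ I}(1 + s_i) with factors in increasing order. Then β(I) ⋆ β(I') = β(I ∩ I'). -/
/-- β(I) = ∏_{i ∈ I} (1 + s_i) in ℂ[S_n], product in increasing order of i. -/
noncomputable def betaI (I : Finset ℕ) : MonoidAlgebra ℂ (Equiv.Perm ℕ) :=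
  ((I.sort (· ≤ ·)).map (fun i =>
    (1 : MonoidAlgebra ℂ (Equiv.Perm ℕ)) +
      MonoidAlgebra.of ℂ (Equiv.Perm ℕ) (Equiv.swap i (i + 1)))).prod

/-- The Hadamard product ⋆ on ℂ[S_n] with respect to the permutation basis:
the bilinear extension of u ⋆ w = u·δ_{u,w}, i.e. coefficientwise multiplication. -/
noncomputable def hstar (f g : MonoidAlgebra ℂ (Equiv.Perm ℕ)) :
    MonoidAlgebra ℂ (Equiv.Perm ℕ) :=
  MonoidAlgebra.ofCoeff (Finsupp.zipWith (· * ·) (mul_zero 0) f.coeff g.coeff)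

/-- w(J) = ∏_{i ∈ J} s_i in S_∞, product in increasing order of i. -/
noncomputable def wJ (J : Finset ℕ) : Equiv.Perm ℕ :=
  ((J.sort (· ≤ ·)).map (fun i => Equiv.swap i (i + 1))).prod

lemma wJ_empty : wJ ∅ = 1 := by simp [wJ]

lemma wJ_insert {a : ℕ} {J : Finset ℕ} (h : ∀ x ∈ J, a < x) (ha : a ∉ J) :
    wJ (insert a J) = Equiv.swap a (a + 1) * wJ J := by
  rw [wJ, Finset.sort_insert _ (fun b hb => (h b hb).le) ha, List.map_cons, List.prod_cons]
  rfl

lemma not_mem_of_min {a : ℕ} {s : Finset ℕ} (h : ∀ x ∈ s, a < x) : a ∉ s :=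
  fun hm => lt_irrefl a (h a hm)

lemma wJ_fix : ∀ (J : Finset ℕ) (x : ℕ), (∀ i ∈ J, x < i) → wJ J x = x := by
  intro J
  induction J using Finset.induction_on_min with
  | empty => intro x _; simp [wJ_empty]
  | insert a s hmin ih =>
    intro x hx
    rw [wJ_insert hmin (not_mem_of_min hmin), Equiv.Perm.mul_apply,
      ih x (fun i hi => hx i (Finset.mem_insert_of_mem hi))]
    have hxa : x < a := hx a (Finset.mem_insert_self a s)
    exact Equiv.swap_apply_of_ne_of_ne hxa.ne (by omega)

lemma wJ_mem : ∀ (J : Finset ℕ), ∀ j ∈ J, wJ J j = j + 1 := by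
  intro J
  induction J using Finset.induction_on_min with
  | empty => intro j hj; simp at hj
  | insert a s hmin ih =>
    intro j hj
    rw [wJ_insert hmin (not_mem_of_min hmin), Equiv.Perm.mul_apply]
    rcases Finset.mem_insert.1 hj with rfl | hj
    · rw [wJ_fix s j hmin, Equiv.swap_apply_left]
    · have hja : a < j := hmin j hj
      rw [ih j hj]
      exact Equiv.swap_apply_of_ne_of_ne (by omega) (by omega)

lemma wJ_not_mem : ∀ (J : Finset ℕ), ∀ j ∉ J, wJ J j ≤ j := by
  intro J
  induction J using Finset.induction_on_min with
  | empty => intro j _; simp [wJ_empty]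
  | insert a s hmin ih =>
    intro j hj
    have hja : j ≠ a := fun h => hj (h ▸ Finset.mem_insert_self a s)
    have hjs : j ∉ s := fun h => hj (Finset.mem_insert_of_mem h)
    have hy : wJ s j ≤ j := ih j hjs
    rw [wJ_insert hmin (not_mem_of_min hmin), Equiv.Perm.mul_apply]
    rcases eq_or_ne (wJ s j) a with h1 | h1
    · rw [h1, Equiv.swap_apply_left]; omega
    · rcases eq_or_ne (wJ s j) (a + 1) with h2 | h2
      · rw [h2, Equiv.swap_apply_right]; omega
      · rw [Equiv.swap_apply_of_ne_of_ne h1 h2]; exact hy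

lemma mem_iff_wJ {J : Finset ℕ} {j : ℕ} : j ∈ J ↔ wJ J j = j + 1 := by
  constructor
  · exact wJ_mem J j
  · intro h
    by_contra hj
    have := wJ_not_mem J j hj
    omega

lemma wJ_inj {J J' : Finset ℕ} (h : wJ J = wJ J') : J = J' := by
  ext j
  rw [mem_iff_wJ, mem_iff_wJ, h]

lemma betaI_eq (I : Finset ℕ) :
    betaI I = ∑ J ∈ I.powerset, MonoidAlgebra.single (wJ J) (1 : ℂ) := by
  induction I using Finset.induction_on_min with
  | empty =>
    simp [betaI, wJ_empty, MonoidAlgebra.one_def]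
  | insert a s hmin ih =>
    have ha : a ∉ s := not_mem_of_min hmin
    have hb : betaI (insert a s)
        = (1 + MonoidAlgebra.of ℂ (Equiv.Perm ℕ) (Equiv.swap a (a + 1))) * betaI s := by
      rw [betaI, Finset.sort_insert _ (fun b hb => (hmin b hb).le) ha, List.map_cons,
        List.prod_cons]
      rfl
    have hdisj : Disjoint s.powerset (s.powerset.image (insert a)) := by
      rw [Finset.disjoint_left]
      intro J hJ hJ'
      obtain ⟨K, _, rfl⟩ := Finset.mem_image.1 hJ'
      exact ha (Finset.mem_powerset.1 hJ (Finset.mem_insert_self a K))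
    have hinj : ∀ x ∈ s.powerset, ∀ y ∈ s.powerset, insert a x = insert a y → x = y := by
      intro x hx y hy hxy
      have hax : a ∉ x := fun h => ha (Finset.mem_powerset.1 hx h)
      have hay : a ∉ y := fun h => ha (Finset.mem_powerset.1 hy h)
      rw [← Finset.erase_insert hax, ← Finset.erase_insert hay, hxy]
    rw [hb, ih, Finset.powerset_insert, Finset.sum_union hdisj, Finset.sum_image hinj,
      add_mul, one_mul, Finset.mul_sum]
    congr 1
    refine Finset.sum_congr rfl fun J hJ => ?_
    have hJs : J ⊆ s := Finset.mem_powerset.1 hJ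
    have haJ : a ∉ J := fun h => ha (hJs h)
    have hminJ : ∀ x ∈ J, a < x := fun x hx => hmin x (hJs hx)
    rw [wJ_insert hminJ haJ, MonoidAlgebra.of_apply, MonoidAlgebra.single_mul_single, one_mul]

open Classical in
lemma betaI_apply (I : Finset ℕ) (u : Equiv.Perm ℕ) :
    (betaI I).coeff u = if ∃ J ⊆ I, wJ J = u then 1 else 0 := by
  classical
  rw [betaI_eq, MonoidAlgebra.coeff_sum, Finsupp.finset_sum_apply]
  have : ∀ J : Finset ℕ,
      (MonoidAlgebra.single (wJ J) (1 : ℂ)).coeff u = if wJ J = u then 1 else 0 :=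
    fun J => by rw [MonoidAlgebra.coeff_single, Finsupp.single_apply]
  simp only [this]
  by_cases h : ∃ J ⊆ I, wJ J = u
  · obtain ⟨J₀, hJ₀, hw⟩ := h
    rw [Finset.sum_eq_single_of_mem J₀ (Finset.mem_powerset.2 hJ₀), if_pos hw,
      if_pos ⟨J₀, hJ₀, hw⟩]
    intro b _ hb
    rw [if_neg]
    intro hbu
    exact hb (wJ_inj (hbu.trans hw.symm))
  · rw [if_neg h, Finset.sum_eq_zero]
    intro J hJ
    rw [if_neg]
    intro hw
    exact h ⟨J, Finset.mem_powerset.1 hJ, hw⟩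

/-- β(I) ⋆ β(I') = β(I ∩ I') for I, I' ⊆ {1, ..., n-1}. -/
theorem stmt3 (n : ℕ) (I I' : Finset ℕ)
    (hI : I ⊆ Finset.Icc 1 (n - 1)) (hI' : I' ⊆ Finset.Icc 1 (n - 1)) :
    hstar (betaI I) (betaI I') = betaI (I ∩ I') := by
  classical
  refine MonoidAlgebra.coeff_injective (Finsupp.ext fun u => ?_)
  have hz : (hstar (betaI I) (betaI I')).coeff u = (betaI I).coeff u * (betaI I').coeff u :=
    Finsupp.zipWith_apply (hf := mul_zero 0)
  rw [hz, betaI_apply, betaI_apply, betaI_apply]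
  by_cases h : ∃ J ⊆ I ∩ I', wJ J = u
  · obtain ⟨J, hJ, hw⟩ := h
    rw [if_pos ⟨J, hJ.trans Finset.inter_subset_left, hw⟩,
      if_pos ⟨J, hJ.trans Finset.inter_subset_right, hw⟩,
      if_pos ⟨J, hJ, hw⟩, one_mul]
  · rw [if_neg h]
    by_cases h1 : ∃ J ⊆ I, wJ J = u
    · by_cases h2 : ∃ J ⊆ I', wJ J = u
      · obtain ⟨J1, hJ1, hw1⟩ := h1
        obtain ⟨J2, hJ2, hw2⟩ := h2
        have : J1 = J2 := wJ_inj (hw1.trans hw2.symm)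
        exact absurd ⟨J1, Finset.subset_inter hJ1 (this ▸ hJ2), hw1⟩ h
      · rw [if_neg h2, mul_zero]
    · rw [if_neg h1, zero_mul]
end

section
/- Let Φ: Λ → Λ(x) ⊗ Λ(y) be the ring homomorphism of symmetric function rings determined by Φ(e_n) = e_n(x)·e_n(y) for all n ≥ 1. Then for any skew shape λ/μ with ℓ(λ) ≤ n, Φ(s_{(λ/μ)'}) = det( JT_{λ/μ}(x) * JT_{λ/μ}(y) ), where JT_{λ/μ}(x) is the matrix with (i,j) entry e_{λ_i - μ_j - i + j}(x) and * is the entrywise (Hadamard) product of matrices. -/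
/-- The elementary symmetric function e_k(x) in the x-variables (the left copy
of ℕ in ℕ ⊕ ℕ), as a formal power series in the two variable sets x, y. -/
noncomputable def eX (k : ℕ) : MvPowerSeries (ℕ ⊕ ℕ) ℚ :=
  fun d => if (∀ v ∈ d.support, d v ≤ 1 ∧ Sum.isLeft v = true) ∧
      (d.sum fun _ v => v) = k then 1 else 0

/-- The elementary symmetric function e_k(y) in the y-variables. -/
noncomputable def eY (k : ℕ) : MvPowerSeries (ℕ ⊕ ℕ) ℚ :=
  fun d => if (∀ v ∈ d.support, d v ≤ 1 ∧ Sum.isRight v = true) ∧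
      (d.sum fun _ v => v) = k then 1 else 0

/-- e_k(x) for integer k (zero for k < 0). -/
noncomputable def eIntX (k : ℤ) : MvPowerSeries (ℕ ⊕ ℕ) ℚ :=
  if k < 0 then 0 else eX k.toNat

/-- e_k(y) for integer k (zero for k < 0). -/
noncomputable def eIntY (k : ℤ) : MvPowerSeries (ℕ ⊕ ℕ) ℚ :=
  if k < 0 then 0 else eY k.toNat

/-- The ring of symmetric functions Λ = ℚ[e_1, e_2, ...], realized as the
polynomial ring with variable X k standing for e_{k+1}; the element e_k of Λ
for integer k (e_0 = 1, e_k = 0 for k < 0). -/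
noncomputable def EPoly (k : ℤ) : MvPolynomial ℕ ℚ :=
  if k < 0 then 0 else if k = 0 then 1 else MvPolynomial.X (k.toNat - 1)


lemma eX_zero : eX 0 = 1 := by
  funext d
  show (if _ then _ else _) = MvPowerSeries.coeff d (1 : MvPowerSeries (ℕ ⊕ ℕ) ℚ)
  rw [MvPowerSeries.coeff_one]
  by_cases h : d = 0
  · subst h; simp
  · have hs : d.sum (fun _ v => v) ≠ 0 := by
      intro h0
      apply h
      ext v
      by_contra hv
      have hv' : v ∈ d.support := Finsupp.mem_support_iff.2 (by simpa using hv)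
      have := Finset.sum_eq_zero_iff.1 h0 v hv'
      exact (Finsupp.mem_support_iff.1 hv') this
    simp [h, hs]

lemma eY_zero : eY 0 = 1 := by
  funext d
  show (if _ then _ else _) = MvPowerSeries.coeff d (1 : MvPowerSeries (ℕ ⊕ ℕ) ℚ)
  rw [MvPowerSeries.coeff_one]
  by_cases h : d = 0
  · subst h; simp
  · have hs : d.sum (fun _ v => v) ≠ 0 := by
      intro h0
      apply h
      ext v
      by_contra hv
      have hv' : v ∈ d.support := Finsupp.mem_support_iff.2 (by simpa using hv)
      have := Finset.sum_eq_zero_iff.1 h0 v hv'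
      exact (Finsupp.mem_support_iff.1 hv') this
    simp [h, hs]

lemma aeval_EPoly (k : ℤ) :
    MvPolynomial.aeval (fun k : ℕ => eX (k + 1) * eY (k + 1)) (EPoly k) =
      eIntX k * eIntY k := by
  unfold EPoly eIntX eIntY
  rcases lt_trichotomy k 0 with h | h | h
  · simp [h]
  · subst h; simp [eX_zero, eY_zero]
  · have h0 : ¬ k < 0 := not_lt.2 h.le
    have h1 : k ≠ 0 := h.ne'
    have h2 : 1 ≤ k.toNat := by omega
    have h3 : k.toNat - 1 + 1 = k.toNat := by omega
    simp [h0, h1, h3]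

/-- Let Φ : Λ → Λ(x) ⊗ Λ(y) be the ring homomorphism determined by
Φ(e_n) = e_n(x)·e_n(y).  For any skew shape λ/μ with ℓ(λ) ≤ L ≤ n,
Φ(s_{(λ/μ)'}) = det(JT_{λ/μ}(x) * JT_{λ/μ}(y)), where s_{(λ/μ)'} is given (per
the dual Jacobi–Trudi identity) by det(e_{λ_i - μ_j - i + j}) in Λ, and * is
the entrywise (Hadamard) product of the Jacobi–Trudi matrices. -/
theorem stmt9 (l m : ℕ → ℕ) (L n : ℕ)
    (hanti : ∀ i, l (i + 1) ≤ l i) (hmanti : ∀ i, m (i + 1) ≤ m i)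
    (hsub : ∀ i, m i ≤ l i) (hlen : ∀ i, L < i → l i = 0) (hLn : L ≤ n) :
    MvPolynomial.aeval (fun k : ℕ => eX (k + 1) * eY (k + 1))
        (Matrix.det (Matrix.of fun i j : Fin n =>
          EPoly ((l (i.1 + 1) : ℤ) - (m (j.1 + 1) : ℤ) - (i.1 + 1) + (j.1 + 1)))) =
      Matrix.det (Matrix.of fun i j : Fin n =>
        eIntX ((l (i.1 + 1) : ℤ) - (m (j.1 + 1) : ℤ) - (i.1 + 1) + (j.1 + 1)) *
          eIntY ((l (i.1 + 1) : ℤ) - (m (j.1 + 1) : ℤ) - (i.1 + 1) + (j.1 + 1))) := by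
  rw [AlgHom.map_det]
  congr 1
  apply Matrix.ext
  intro i j
  simp only [AlgHom.mapMatrix_apply, Matrix.map_apply, Matrix.of_apply]
  exact aeval_EPoly _
end

section
/- Define the H-matrix HJT_{λ/μ}(x) = (h_{λ_i - μ_j + i - j}(x))_{i,j=1}^{ℓ(λ)} using complete homogeneous symmetric functions with the opposite index convention. The determinant det( HJT_{(2,2,2)}(x) * HJT_{(2,2,2)}(y) ) of the entrywise product, expanded in monomials in x and y variables, has at least one negative coefficient (it is not monomial-positive). -/
/-- The complete homogeneous symmetric function h_k(x) in the x-variables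
(the left copy of ℕ in ℕ ⊕ ℕ), as a formal power series in the two variable
sets x, y: the coefficient of a monomial is 1 iff the monomial uses only
x-variables and has total degree k. -/
noncomputable def hX (k : ℕ) : MvPowerSeries (ℕ ⊕ ℕ) ℚ :=
  fun d => if (∀ v ∈ d.support, Sum.isLeft v = true) ∧
      (d.sum fun _ v => v) = k then 1 else 0

/-- The complete homogeneous symmetric function h_k(y) in the y-variables. -/
noncomputable def hY (k : ℕ) : MvPowerSeries (ℕ ⊕ ℕ) ℚ :=
  fun d => if (∀ v ∈ d.support, Sum.isRight v = true) ∧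
      (d.sum fun _ v => v) = k then 1 else 0

/-- h_k(x) for an integer index (h_k = 0 for k < 0). -/
noncomputable def hIntX (k : ℤ) : MvPowerSeries (ℕ ⊕ ℕ) ℚ :=
  if k < 0 then 0 else hX k.toNat

/-- h_k(y) for an integer index (h_k = 0 for k < 0). -/
noncomputable def hIntY (k : ℤ) : MvPowerSeries (ℕ ⊕ ℕ) ℚ :=
  if k < 0 then 0 else hY k.toNat

namespace Stmt19Aux

abbrev V : Type := ℕ ⊕ ℕ
abbrev S : Type := MvPowerSeries V ℚ

/-- `F` is supported on x-monomials. -/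
def XS (F : S) : Prop :=
  ∀ d : V →₀ ℕ, MvPowerSeries.coeff d F ≠ 0 → ∀ v ∈ d.support, Sum.isLeft v = true

/-- `F` is supported on y-monomials. -/
def YS (F : S) : Prop :=
  ∀ d : V →₀ ℕ, MvPowerSeries.coeff d F ≠ 0 → ∀ v ∈ d.support, Sum.isRight v = true

lemma hX_XS (k : ℕ) : XS (hX k) := by
  intro d hd v hv
  by_cases hc : (∀ v ∈ d.support, Sum.isLeft v = true) ∧ (d.sum fun _ v => v) = k
  · exact hc.1 v hv
  · exfalso; apply hd; rw [MvPowerSeries.coeff_apply]; unfold hX; rw [if_neg hc]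

lemma hY_YS (k : ℕ) : YS (hY k) := by
  intro d hd v hv
  by_cases hc : (∀ v ∈ d.support, Sum.isRight v = true) ∧ (d.sum fun _ v => v) = k
  · exact hc.1 v hv
  · exfalso; apply hd; rw [MvPowerSeries.coeff_apply]; unfold hY; rw [if_neg hc]

lemma XS.mul {F G : S} (hF : XS F) (hG : XS G) : XS (F * G) := by
  intro d hd v hv
  rw [MvPowerSeries.coeff_mul] at hd
  obtain ⟨p, hp, hne⟩ := Finset.exists_ne_zero_of_sum_ne_zero hd
  rw [Finset.HasAntidiagonal.mem_antidiagonal] at hp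
  have h1 : MvPowerSeries.coeff p.1 F ≠ 0 := left_ne_zero_of_mul hne
  have h2 : MvPowerSeries.coeff p.2 G ≠ 0 := right_ne_zero_of_mul hne
  have : v ∈ (p.1 + p.2).support := by rw [hp]; exact hv
  rcases Finset.mem_union.1 (Finsupp.support_add this) with h | h
  · exact hF p.1 h1 v h
  · exact hG p.2 h2 v h

lemma YS.mul {F G : S} (hF : YS F) (hG : YS G) : YS (F * G) := by
  intro d hd v hv
  rw [MvPowerSeries.coeff_mul] at hd
  obtain ⟨p, hp, hne⟩ := Finset.exists_ne_zero_of_sum_ne_zero hd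
  rw [Finset.HasAntidiagonal.mem_antidiagonal] at hp
  have h1 : MvPowerSeries.coeff p.1 F ≠ 0 := left_ne_zero_of_mul hne
  have h2 : MvPowerSeries.coeff p.2 G ≠ 0 := right_ne_zero_of_mul hne
  have : v ∈ (p.1 + p.2).support := by rw [hp]; exact hv
  rcases Finset.mem_union.1 (Finsupp.support_add this) with h | h
  · exact hF p.1 h1 v h
  · exact hG p.2 h2 v h

/-- Separation of variables: the coefficient of a split monomial in a product
of an x-supported and a y-supported series factors. -/
lemma sep {F G : S} (hF : XS F) (hG : YS G) (a b : V →₀ ℕ)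
    (ha : ∀ v ∈ a.support, Sum.isLeft v = true)
    (hb : ∀ v ∈ b.support, Sum.isRight v = true) :
    MvPowerSeries.coeff (a + b) (F * G) =
      MvPowerSeries.coeff a F * MvPowerSeries.coeff b G := by
  rw [MvPowerSeries.coeff_mul]
  apply Finset.sum_eq_single (a, b)
  · intro p hp hne
    rw [Finset.HasAntidiagonal.mem_antidiagonal] at hp
    by_contra hne0
    have h1 : MvPowerSeries.coeff p.1 F ≠ 0 := left_ne_zero_of_mul hne0
    have h2 : MvPowerSeries.coeff p.2 G ≠ 0 := right_ne_zero_of_mul hne0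
    have key : ∀ w, p.1 w + p.2 w = a w + b w := by
      intro w
      have h := DFunLike.congr_fun hp w
      simpa only [Finsupp.add_apply] using h
    have hp1 : p.1 = a := by
      ext v
      have hk := key v
      cases v with
      | inl s =>
        have hz1 : p.2 (Sum.inl s) = 0 := by
          by_contra h
          exact absurd (hG p.2 h2 (Sum.inl s) (Finsupp.mem_support_iff.2 h)) (by simp)
        have hz2 : b (Sum.inl s) = 0 := by
          by_contra h
          exact absurd (hb (Sum.inl s) (Finsupp.mem_support_iff.2 h)) (by simp)
        omega
      | inr s =>
        have hz1 : p.1 (Sum.inr s) = 0 := by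
          by_contra h
          exact absurd (hF p.1 h1 (Sum.inr s) (Finsupp.mem_support_iff.2 h)) (by simp)
        have hz2 : a (Sum.inr s) = 0 := by
          by_contra h
          exact absurd (ha (Sum.inr s) (Finsupp.mem_support_iff.2 h)) (by simp)
        omega
    have hp2 : p.2 = b := by
      ext v
      have hk := key v
      have h1v := DFunLike.congr_fun hp1 v
      omega
    exact hne (Prod.ext hp1 hp2)
  · intro h; simp at h

/-- Convolution formula for the coefficient of a two-variable monomial in a
product of two power series. -/
lemma key2 {u v : V} (huv : u ≠ v) (m n : ℕ) (F G : S) :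
    MvPowerSeries.coeff (Finsupp.single u m + Finsupp.single v n) (F * G) =
      ∑ i ∈ Finset.range (m + 1), ∑ j ∈ Finset.range (n + 1),
        MvPowerSeries.coeff (Finsupp.single u i + Finsupp.single v j) F *
          MvPowerSeries.coeff (Finsupp.single u (m - i) + Finsupp.single v (n - j)) G := by
  rw [MvPowerSeries.coeff_mul, ← Finset.sum_product']
  have hval : ∀ p : (V →₀ ℕ) × (V →₀ ℕ),
      p.1 + p.2 = Finsupp.single u m + Finsupp.single v n →
      (p.1 u ≤ m ∧ p.1 v ≤ n) ∧
      p.1 = Finsupp.single u (p.1 u) + Finsupp.single v (p.1 v) ∧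
      p.2 = Finsupp.single u (m - p.1 u) + Finsupp.single v (n - p.1 v) := by
    intro p hp
    have key : ∀ w, p.1 w + p.2 w = (Finsupp.single u m) w + (Finsupp.single v n) w := by
      intro w
      have h := DFunLike.congr_fun hp w
      simpa only [Finsupp.add_apply] using h
    have hu := key u
    have hv := key v
    rw [Finsupp.single_eq_same, Finsupp.single_eq_of_ne' (Ne.symm huv)] at hu
    rw [Finsupp.single_eq_same, Finsupp.single_eq_of_ne' huv] at hv
    have hw : ∀ w, w ≠ u → w ≠ v → p.1 w = 0 ∧ p.2 w = 0 := by
      intro w hwu hwv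
      have := key w
      rw [Finsupp.single_eq_of_ne' (Ne.symm hwu), Finsupp.single_eq_of_ne' (Ne.symm hwv)] at this
      omega
    refine ⟨⟨by omega, by omega⟩, ?_, ?_⟩
    · ext w
      by_cases h1 : w = u
      · subst h1; simp [Finsupp.single_eq_of_ne' (Ne.symm huv)]
      · by_cases h2 : w = v
        · subst h2; simp [Finsupp.single_eq_of_ne' huv]
        · simp [Finsupp.single_eq_of_ne' (fun h => h1 h.symm),
            Finsupp.single_eq_of_ne' (fun h => h2 h.symm), (hw w h1 h2).1]
    · ext w
      by_cases h1 : w = u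
      · subst h1
        simp only [Finsupp.add_apply, Finsupp.single_eq_same,
          Finsupp.single_eq_of_ne' (Ne.symm huv)]
        omega
      · by_cases h2 : w = v
        · subst h2
          simp only [Finsupp.add_apply, Finsupp.single_eq_same,
            Finsupp.single_eq_of_ne' huv]
          omega
        · simp only [Finsupp.add_apply,
            Finsupp.single_eq_of_ne' (fun h => h1 h.symm),
            Finsupp.single_eq_of_ne' (fun h => h2 h.symm)]
          exact (hw w h1 h2).2
  refine Finset.sum_nbij' (fun p => (p.1 u, p.1 v))
      (fun q => (Finsupp.single u q.1 + Finsupp.single v q.2,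
        Finsupp.single u (m - q.1) + Finsupp.single v (n - q.2))) ?_ ?_ ?_ ?_ ?_
  · intro p hp
    rw [Finset.HasAntidiagonal.mem_antidiagonal] at hp
    obtain ⟨⟨h1, h2⟩, -, -⟩ := hval p hp
    simp only [Finset.mem_product, Finset.mem_range]
    omega
  · intro q hq
    simp only [Finset.mem_product, Finset.mem_range] at hq
    rw [Finset.HasAntidiagonal.mem_antidiagonal]
    ext w
    simp only [Finsupp.add_apply, Finsupp.single_apply]
    split <;> split <;> omega
  · intro p hp
    rw [Finset.HasAntidiagonal.mem_antidiagonal] at hp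
    obtain ⟨-, e1, e2⟩ := hval p hp
    exact Prod.ext e1.symm e2.symm
  · intro q hq
    simp only [Finsupp.add_apply, Finsupp.single_eq_same,
      Finsupp.single_eq_of_ne' huv, Finsupp.single_eq_of_ne' (Ne.symm huv)]
    simp
  · intro p hp
    rw [Finset.HasAntidiagonal.mem_antidiagonal] at hp
    obtain ⟨-, e1, e2⟩ := hval p hp
    rw [← e1, ← e2]

lemma key2L (m n : ℕ) (F G : S) :
    MvPowerSeries.coeff
        (Finsupp.single (Sum.inl 0 : V) m + Finsupp.single (Sum.inl 1 : V) n) (F * G) =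
      ∑ i ∈ Finset.range (m + 1), ∑ j ∈ Finset.range (n + 1),
        MvPowerSeries.coeff
            (Finsupp.single (Sum.inl 0 : V) i + Finsupp.single (Sum.inl 1 : V) j) F *
          MvPowerSeries.coeff
            (Finsupp.single (Sum.inl 0 : V) (m - i) +
              Finsupp.single (Sum.inl 1 : V) (n - j)) G :=
  key2 (by simp) m n F G

lemma key2R (m n : ℕ) (F G : S) :
    MvPowerSeries.coeff
        (Finsupp.single (Sum.inr 0 : V) m + Finsupp.single (Sum.inr 1 : V) n) (F * G) =
      ∑ i ∈ Finset.range (m + 1), ∑ j ∈ Finset.range (n + 1),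
        MvPowerSeries.coeff
            (Finsupp.single (Sum.inr 0 : V) i + Finsupp.single (Sum.inr 1 : V) j) F *
          MvPowerSeries.coeff
            (Finsupp.single (Sum.inr 0 : V) (m - i) +
              Finsupp.single (Sum.inr 1 : V) (n - j)) G :=
  key2 (by simp) m n F G

lemma sum_pair (a b : V) (i j : ℕ) :
    ((Finsupp.single a i + Finsupp.single b j).sum fun _ v => v) = i + j := by
  rw [Finsupp.sum_add_index' (fun _ => rfl) (fun _ _ _ => rfl),
    Finsupp.sum_single_index rfl, Finsupp.sum_single_index rfl]

lemma supp_pair_left (s t : ℕ) (i j : ℕ) :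
    ∀ w ∈ (Finsupp.single (Sum.inl s : V) i + Finsupp.single (Sum.inl t : V) j).support,
      Sum.isLeft w = true := by
  intro w hw
  rcases Finset.mem_union.1 (Finsupp.support_add hw) with h | h <;>
    [have := Finsupp.support_single_subset h; have := Finsupp.support_single_subset h] <;>
    simp_all

lemma supp_pair_right (s t : ℕ) (i j : ℕ) :
    ∀ w ∈ (Finsupp.single (Sum.inr s : V) i + Finsupp.single (Sum.inr t : V) j).support,
      Sum.isRight w = true := by
  intro w hw
  rcases Finset.mem_union.1 (Finsupp.support_add hw) with h | h <;>
    [have := Finsupp.support_single_subset h; have := Finsupp.support_single_subset h] <;>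
    simp_all

lemma coeff_hX_pair (s t k i j : ℕ) :
    MvPowerSeries.coeff
        (Finsupp.single (Sum.inl s : V) i + Finsupp.single (Sum.inl t : V) j) (hX k) =
      if i + j = k then 1 else 0 := by
  rw [MvPowerSeries.coeff_apply]
  unfold hX
  rw [sum_pair]
  simp [supp_pair_left s t i j]

lemma coeff_hY_pair (s t k i j : ℕ) :
    MvPowerSeries.coeff
        (Finsupp.single (Sum.inr s : V) i + Finsupp.single (Sum.inr t : V) j) (hY k) =
      if i + j = k then 1 else 0 := by
  rw [MvPowerSeries.coeff_apply]
  unfold hY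
  rw [sum_pair]
  simp [supp_pair_right s t i j]

/-- The x-part of the witness monomial: x₀¹ x₁⁵. -/
noncomputable def α : V →₀ ℕ :=
  Finsupp.single (Sum.inl 0 : V) 1 + Finsupp.single (Sum.inl 1 : V) 5

/-- The y-part of the witness monomial: y₀³ y₁³. -/
noncomputable def β : V →₀ ℕ :=
  Finsupp.single (Sum.inr 0 : V) 3 + Finsupp.single (Sum.inr 1 : V) 3

lemma cx222 : MvPowerSeries.coeff α (hX 2 * hX 2 * hX 2) = 3 := by
  rw [α, mul_assoc, key2L]
  simp only [key2L, coeff_hX_pair]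
  simp only [Finset.sum_range_succ, Finset.sum_range_zero]
  norm_num

lemma cx123 : MvPowerSeries.coeff α (hX 1 * hX 2 * hX 3) = 3 := by
  rw [α, mul_assoc, key2L]
  simp only [key2L, coeff_hX_pair]
  simp only [Finset.sum_range_succ, Finset.sum_range_zero]
  norm_num

lemma cx114 : MvPowerSeries.coeff α (hX 1 * hX 1 * hX 4) = 3 := by
  rw [α, mul_assoc, key2L]
  simp only [key2L, coeff_hX_pair]
  simp only [Finset.sum_range_succ, Finset.sum_range_zero]
  norm_num

lemma cx033 : MvPowerSeries.coeff α (hX 0 * hX 3 * hX 3) = 2 := by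
  rw [α, mul_assoc, key2L]
  simp only [key2L, coeff_hX_pair]
  simp only [Finset.sum_range_succ, Finset.sum_range_zero]
  norm_num

lemma cx024 : MvPowerSeries.coeff α (hX 0 * hX 2 * hX 4) = 2 := by
  rw [α, mul_assoc, key2L]
  simp only [key2L, coeff_hX_pair]
  simp only [Finset.sum_range_succ, Finset.sum_range_zero]
  norm_num

lemma cy222 : MvPowerSeries.coeff β (hY 2 * hY 2 * hY 2) = 7 := by
  rw [β, mul_assoc, key2R]
  simp only [key2R, coeff_hY_pair]
  simp only [Finset.sum_range_succ, Finset.sum_range_zero]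
  norm_num

lemma cy123 : MvPowerSeries.coeff β (hY 1 * hY 2 * hY 3) = 6 := by
  rw [β, mul_assoc, key2R]
  simp only [key2R, coeff_hY_pair]
  simp only [Finset.sum_range_succ, Finset.sum_range_zero]
  norm_num

lemma cy114 : MvPowerSeries.coeff β (hY 1 * hY 1 * hY 4) = 4 := by
  rw [β, mul_assoc, key2R]
  simp only [key2R, coeff_hY_pair]
  simp only [Finset.sum_range_succ, Finset.sum_range_zero]
  norm_num

lemma cy033 : MvPowerSeries.coeff β (hY 0 * hY 3 * hY 3) = 4 := by
  rw [β, mul_assoc, key2R]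
  simp only [key2R, coeff_hY_pair]
  simp only [Finset.sum_range_succ, Finset.sum_range_zero]
  norm_num

lemma cy024 : MvPowerSeries.coeff β (hY 0 * hY 2 * hY 4) = 3 := by
  rw [β, mul_assoc, key2R]
  simp only [key2R, coeff_hY_pair]
  simp only [Finset.sum_range_succ, Finset.sum_range_zero]
  norm_num

lemma hα : ∀ v ∈ α.support, Sum.isLeft v = true := supp_pair_left 0 1 1 5

lemma hβ : ∀ v ∈ β.support, Sum.isRight v = true := supp_pair_right 0 1 3 3

lemma det_eq :
    (Matrix.det (Matrix.of fun i j : Fin 3 =>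
          hIntX ((2 : ℤ) + (i.1 + 1) - (j.1 + 1)) *
            hIntY ((2 : ℤ) + (i.1 + 1) - (j.1 + 1)))) =
      (hX 2 * hX 2 * hX 2) * (hY 2 * hY 2 * hY 2)
      - (hX 1 * hX 2 * hX 3) * (hY 1 * hY 2 * hY 3)
      - (hX 1 * hX 2 * hX 3) * (hY 1 * hY 2 * hY 3)
      + (hX 1 * hX 1 * hX 4) * (hY 1 * hY 1 * hY 4)
      + (hX 0 * hX 3 * hX 3) * (hY 0 * hY 3 * hY 3)
      - (hX 0 * hX 2 * hX 4) * (hY 0 * hY 2 * hY 4) := by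
  rw [Matrix.det_fin_three]
  simp only [Matrix.of_apply]
  norm_num [hIntX, hIntY]
  simp only [show Int.toNat 2 = 2 from rfl, show Int.toNat 3 = 3 from rfl,
    show Int.toNat 4 = 4 from rfl]
  ring

end Stmt19Aux

open Stmt19Aux in
/-- For λ = (2,2,2) and μ = ∅, the determinant of the entrywise
(Hadamard) product HJT_{(2,2,2)}(x) * HJT_{(2,2,2)}(y), where
HJT_{λ/μ}(x) = (h_{λ_i - μ_j + i - j}(x)), is not monomial-positive: some
monomial has a negative coefficient. -/
theorem stmt19 :
    ∃ d : (ℕ ⊕ ℕ) →₀ ℕ,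
      MvPowerSeries.coeff d
        (Matrix.det (Matrix.of fun i j : Fin 3 =>
          hIntX ((2 : ℤ) + (i.1 + 1) - (j.1 + 1)) *
            hIntY ((2 : ℤ) + (i.1 + 1) - (j.1 + 1)))) < 0 := by
  refine ⟨α + β, ?_⟩
  rw [det_eq]
  simp only [map_sub, map_add]
  rw [sep (((hX_XS 2).mul (hX_XS 2)).mul (hX_XS 2))
      (((hY_YS 2).mul (hY_YS 2)).mul (hY_YS 2)) α β hα hβ,
    sep (((hX_XS 1).mul (hX_XS 2)).mul (hX_XS 3))
      (((hY_YS 1).mul (hY_YS 2)).mul (hY_YS 3)) α β hα hβ,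
    sep (((hX_XS 1).mul (hX_XS 1)).mul (hX_XS 4))
      (((hY_YS 1).mul (hY_YS 1)).mul (hY_YS 4)) α β hα hβ,
    sep (((hX_XS 0).mul (hX_XS 3)).mul (hX_XS 3))
      (((hY_YS 0).mul (hY_YS 3)).mul (hY_YS 3)) α β hα hβ,
    sep (((hX_XS 0).mul (hX_XS 2)).mul (hX_XS 4))
      (((hY_YS 0).mul (hY_YS 2)).mul (hY_YS 4)) α β hα hβ,
    cx222, cx123, cx114, cx033, cx024, cy222, cy123, cy114, cy033, cy024]
  norm_num
end
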